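/- Let K = T ∪ A be a DL-Lite_FR KB and let I1, I2 be interpretations with disjoint support sets such that the support set of I2 is disjoint from the set of constants occurring in K. Then I1 ⊎ I2 is a model of K if and only if I1 is a model of K and I2 is a model of T. -/
import Mathlib


namespace DLLite

/-- The countably infinite domain of constants. -/
abbrev Δ : Type := ℕ
/-- Countably infinite set of concept names. -/
abbrev ConceptName : Type := ℕ
/-- Countably infinite set of role names. -/
abbrev RoleName : Type := ℕ

/-- An interpretation assigns a set of domain elements to each concept name
and a binary relation to each role name; constants are interpreted as themselves. -/
structure Interp where
  concept : ConceptName → Set Δ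
  role : RoleName → Set (Δ × Δ)

/-- Basic roles: `P` or `P⁻`. -/
inductive BasicRole where
  | pos (P : RoleName)
  | inv (P : RoleName)
deriving DecidableEq

def BasicRole.interp (R : BasicRole) (I : Interp) : Set (Δ × Δ) :=
  match R with
  | .pos P => I.role P
  | .inv P => {p | (p.2, p.1) ∈ I.role P}

/-- Basic concepts: `A` or `∃R`. -/
inductive BasicConcept where
  | atom (A : ConceptName)
  | ex (R : BasicRole)
deriving DecidableEq

def BasicConcept.interp (B : BasicConcept) (I : Interp) : Set Δ :=
  match B with
  | .atom A => I.concept A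
  | .ex R => {o | ∃ o', (o, o') ∈ R.interp I}

/-- DL-Lite_FR assertions: (negative) concept/role inclusions, functionality
assertions, and membership assertions. -/
inductive Assertion where
  | conceptIncl (B1 B2 : BasicConcept)
  | conceptDisj (B1 B2 : BasicConcept)
  | roleIncl (R1 R2 : BasicRole)
  | roleDisj (R1 R2 : BasicRole)
  | funct (R : BasicRole)
  | memberC (A : ConceptName) (a : Δ)
  | memberR (P : RoleName) (a b : Δ)
deriving DecidableEq

/-- Satisfaction of an assertion by an interpretation. -/
def Interp.sat (I : Interp) : Assertion → Prop
  | .conceptIncl B1 B2 => B1.interp I ⊆ B2.interp I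
  | .conceptDisj B1 B2 => B1.interp I ∩ B2.interp I = ∅
  | .roleIncl R1 R2 => R1.interp I ⊆ R2.interp I
  | .roleDisj R1 R2 => R1.interp I ∩ R2.interp I = ∅
  | .funct R => ∀ o o1 o2, (o, o1) ∈ R.interp I → (o, o2) ∈ R.interp I → o1 = o2
  | .memberC A a => a ∈ I.concept A
  | .memberR P a b => (a, b) ∈ I.role P

/-- TBox assertions: inclusion or functionality assertions. -/
def Assertion.isTBox : Assertion → Prop
  | .memberC _ _ => False
  | .memberR _ _ _ => False
  | _ => True

/-- Membership (ABox) assertions. -/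
def Assertion.isMembership : Assertion → Prop
  | .memberC _ _ => True
  | .memberR _ _ _ => True
  | _ => False

/-- The constants occurring in an assertion. -/
def Assertion.constants : Assertion → Set Δ
  | .memberC _ a => {a}
  | .memberR _ a b => {a, b}
  | _ => ∅

/-- A knowledge base: a finite set of assertions (TBox ∪ ABox). -/
abbrev KB := Finset Assertion

/-- The set of models of a KB. -/
def Mod (K : KB) : Set Interp := {I | ∀ a ∈ K, I.sat a}

/-- Interpretations falsifying at least one assertion of `K`. -/
def NonMod (K : KB) : Set Interp := {I | ∃ a ∈ K, ¬ I.sat a}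

/-- The constants occurring in a KB. -/
def KB.constants (K : KB) : Set Δ := ⋃ a ∈ K, Assertion.constants a

/-- Atoms: ground facts `A(o)` or `P(o,o')`. -/
inductive Atom where
  | c (A : ConceptName) (o : Δ)
  | r (P : RoleName) (o o' : Δ)
deriving DecidableEq

/-- The atom set of an interpretation. -/
def Interp.atoms (I : Interp) : Set Atom :=
  fun a => match a with
  | .c A o => o ∈ I.concept A
  | .r P o o' => (o, o') ∈ I.role P

/-- Concept or role names (symbols). -/
inductive SName where
  | c (A : ConceptName)
  | r (P : RoleName)
deriving DecidableEq

/-- Atom-based set distance: symmetric difference of atom sets. -/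
def distASub (I J : Interp) : Set Atom := symmDiff I.atoms J.atoms
/-- Atom-based cardinality distance. -/
noncomputable def distACard (I J : Interp) : ℕ∞ := (symmDiff I.atoms J.atoms).encard
/-- Symbol-based set distance: names interpreted differently. -/
def distSSub (I J : Interp) : Set SName :=
  fun n => match n with
  | .c A => I.concept A ≠ J.concept A
  | .r P => I.role P ≠ J.role P
/-- Symbol-based cardinality distance. -/
noncomputable def distSCard (I J : Interp) : ℕ∞ := (distSSub I J).encard

/-- Global expansion w.r.t. a distance. -/
def expGlobD {D : Type} [PartialOrder D] (dist : Interp → Interp → D)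
    (M N : Set Interp) : Set Interp :=
  {J | J ∈ N ∧ ∃ I ∈ M, ∀ I' ∈ M, ∀ J' ∈ N, ¬ dist I' J' < dist I J}

/-- Local expansion w.r.t. a distance. -/
def expLocD {D : Type} [PartialOrder D] (dist : Interp → Interp → D)
    (M N : Set Interp) : Set Interp :=
  {J | J ∈ N ∧ ∃ I ∈ M, ∀ J' ∈ N, ¬ dist I J' < dist I J}

inductive LocKind | glob | loc
inductive MeasKind | atoms | symbols
inductive OrdKind | subset | card

/-- The expansion operator on sets of interpretations for each of the
eight model-based semantics `X^y_z`. -/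
def expansionSet : LocKind → MeasKind → OrdKind → Set Interp → Set Interp → Set Interp
  | .glob, .atoms, .subset => expGlobD distASub
  | .glob, .atoms, .card => expGlobD distACard
  | .glob, .symbols, .subset => expGlobD distSSub
  | .glob, .symbols, .card => expGlobD distSCard
  | .loc, .atoms, .subset => expLocD distASub
  | .loc, .atoms, .card => expLocD distACard
  | .loc, .symbols, .subset => expLocD distSSub
  | .loc, .symbols, .card => expLocD distSCard

/-- KB expansion `K ⊕ N` under semantics `X^y_z`. -/
def expandKB (X : LocKind) (y : MeasKind) (z : OrdKind) (K N : KB) : Set Interp :=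
  expansionSet X y z (Mod K) (Mod N)

/-- KB contraction `K ⊖ N` under semantics `X^y_z`. -/
def contractKB (X : LocKind) (y : MeasKind) (z : OrdKind) (K N : KB) : Set Interp :=
  Mod K ∪ expansionSet X y z (Mod K) (NonMod N)

/-- Union of two interpretations. -/
def Interp.union (I1 I2 : Interp) : Interp :=
  ⟨fun A => I1.concept A ∪ I2.concept A, fun P => I1.role P ∪ I2.role P⟩

/-- The support set of an interpretation. -/
def Interp.support (I : Interp) : Set Δ :=
  (⋃ A, I.concept A) ∪ (⋃ P, {o | ∃ o', (o, o') ∈ I.role P ∨ (o', o) ∈ I.role P})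

/-- The image `I^f` of an interpretation under an (injective) map `f`. -/
def Interp.image (I : Interp) (f : Δ → Δ) : Interp :=
  ⟨fun A => f '' I.concept A, fun P => (fun p => (f p.1, f p.2)) '' I.role P⟩

/-- `h` is a homomorphism from `I` to `J`. -/
def IsHom (h : Δ → Δ) (I J : Interp) : Prop :=
  (∀ A, h '' I.concept A ⊆ J.concept A) ∧
  (∀ P o o', (o, o') ∈ I.role P → (h o, h o') ∈ J.role P)

end DLLite

namespace DLLite

lemma role_union (R : BasicRole) (I1 I2 : Interp) :
    R.interp (I1.union I2) = R.interp I1 ∪ R.interp I2 := by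
  cases R <;> (ext ⟨o, o'⟩; simp [BasicRole.interp, Interp.union])

lemma concept_union (B : BasicConcept) (I1 I2 : Interp) :
    B.interp (I1.union I2) = B.interp I1 ∪ B.interp I2 := by
  cases B with
  | atom A => rfl
  | ex R =>
    ext o
    simp only [BasicConcept.interp, role_union, Set.mem_union, Set.mem_setOf_eq]
    constructor
    · rintro ⟨o', h | h⟩
      · exact Or.inl ⟨o', h⟩
      · exact Or.inr ⟨o', h⟩
    · rintro (⟨o', h⟩ | ⟨o', h⟩)
      · exact ⟨o', Or.inl h⟩
      · exact ⟨o', Or.inr h⟩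

lemma support_of_role {R : BasicRole} {I : Interp} {o o' : Δ}
    (h : (o, o') ∈ R.interp I) : o ∈ I.support ∧ o' ∈ I.support := by
  cases R with
  | pos P =>
    exact ⟨Or.inr (Set.mem_iUnion.2 ⟨P, ⟨o', Or.inl h⟩⟩),
           Or.inr (Set.mem_iUnion.2 ⟨P, ⟨o, Or.inr h⟩⟩)⟩
  | inv P =>
    exact ⟨Or.inr (Set.mem_iUnion.2 ⟨P, ⟨o', Or.inr h⟩⟩),
           Or.inr (Set.mem_iUnion.2 ⟨P, ⟨o, Or.inl h⟩⟩)⟩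

lemma support_of_concept {B : BasicConcept} {I : Interp} {o : Δ}
    (h : o ∈ B.interp I) : o ∈ I.support := by
  cases B with
  | atom A => exact Or.inl (Set.mem_iUnion.2 ⟨A, h⟩)
  | ex R => obtain ⟨o', h⟩ := h; exact (support_of_role h).1

lemma sat_tbox_union {a : Assertion} (ht : a.isTBox) {I1 I2 : Interp}
    (hdisj : Disjoint I1.support I2.support) :
    (I1.union I2).sat a ↔ I1.sat a ∧ I2.sat a := by
  have hdC : ∀ {B B' : BasicConcept} {o : Δ},
      o ∈ B.interp I1 → o ∈ B'.interp I2 → False := fun h1 h2 =>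
    hdisj.ne_of_mem (support_of_concept h1) (support_of_concept h2) rfl
  have hdR : ∀ {R R' : BasicRole} {p : Δ × Δ},
      p ∈ R.interp I1 → p ∈ R'.interp I2 → False := fun h1 h2 =>
    hdisj.ne_of_mem (support_of_role h1).1 (support_of_role h2).1 rfl
  cases a with
  | conceptIncl B1 B2 =>
    simp only [Interp.sat, concept_union]
    constructor
    · intro h
      constructor
      · intro x hx
        rcases h (Or.inl hx) with h' | h'
        · exact h'
        · exact absurd rfl (hdisj.ne_of_mem (support_of_concept hx)
            (support_of_concept h'))
      · intro x hx
        rcases h (Or.inr hx) with h' | h'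
        · exact absurd rfl (hdisj.ne_of_mem (support_of_concept h')
            (support_of_concept hx))
        · exact h'
    · rintro ⟨h1, h2⟩ x (hx | hx)
      · exact Or.inl (h1 hx)
      · exact Or.inr (h2 hx)
  | conceptDisj B1 B2 =>
    simp only [Interp.sat, concept_union, Set.eq_empty_iff_forall_notMem,
      Set.mem_inter_iff, Set.mem_union]
    constructor
    · intro h
      exact ⟨fun x ⟨h1, h2⟩ => h x ⟨Or.inl h1, Or.inl h2⟩,
             fun x ⟨h1, h2⟩ => h x ⟨Or.inr h1, Or.inr h2⟩⟩
    · rintro ⟨h1, h2⟩ x ⟨ha | ha, hb | hb⟩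
      · exact h1 x ⟨ha, hb⟩
      · exact hdC ha hb
      · exact hdC hb ha
      · exact h2 x ⟨ha, hb⟩
  | roleIncl R1 R2 =>
    simp only [Interp.sat, role_union]
    constructor
    · intro h
      constructor
      · intro p hp
        rcases h (Or.inl hp) with h' | h'
        · exact h'
        · exact absurd h' (fun h' => hdR hp h')
      · intro p hp
        rcases h (Or.inr hp) with h' | h'
        · exact absurd h' (fun h' => hdR h' hp)
        · exact h'
    · rintro ⟨h1, h2⟩ p (hp | hp)
      · exact Or.inl (h1 hp)
      · exact Or.inr (h2 hp)
  | roleDisj R1 R2 =>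
    simp only [Interp.sat, role_union, Set.eq_empty_iff_forall_notMem,
      Set.mem_inter_iff, Set.mem_union]
    constructor
    · intro h
      exact ⟨fun p ⟨h1, h2⟩ => h p ⟨Or.inl h1, Or.inl h2⟩,
             fun p ⟨h1, h2⟩ => h p ⟨Or.inr h1, Or.inr h2⟩⟩
    · rintro ⟨h1, h2⟩ p ⟨ha | ha, hb | hb⟩
      · exact h1 p ⟨ha, hb⟩
      · exact hdR ha hb
      · exact hdR hb ha
      · exact h2 p ⟨ha, hb⟩
  | funct R =>
    simp only [Interp.sat, role_union, Set.mem_union]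
    constructor
    · intro h
      exact ⟨fun o o1 o2 h1 h2 => h o o1 o2 (Or.inl h1) (Or.inl h2),
             fun o o1 o2 h1 h2 => h o o1 o2 (Or.inr h1) (Or.inr h2)⟩
    · rintro ⟨h1, h2⟩ o o1 o2 (ha | ha) (hb | hb)
      · exact h1 o o1 o2 ha hb
      · exact absurd rfl (hdisj.ne_of_mem (support_of_role ha).1
          (support_of_role hb).1)
      · exact absurd rfl (hdisj.ne_of_mem (support_of_role hb).1
          (support_of_role ha).1)
      · exact h2 o o1 o2 ha hb
  | memberC A a => exact absurd ht (by simp [Assertion.isTBox])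
  | memberR P a b => exact absurd ht (by simp [Assertion.isTBox])

/-- For a KB `K = T ∪ A` and interpretations with disjoint support sets,
where the support of `I2` avoids the constants of `K`:
`I1 ⊎ I2` is a model of `K` iff `I1` is a model of `K` and `I2` is a model
of `T`. -/
theorem disjoint_union_model_kb (T A : Finset Assertion)
    (hT : ∀ a ∈ T, a.isTBox) (hA : ∀ a ∈ A, a.isMembership)
    (I1 I2 : Interp) (hdisj : Disjoint I1.support I2.support)
    (hc : Disjoint I2.support (KB.constants (T ∪ A))) :
    I1.union I2 ∈ Mod (T ∪ A) ↔ I1 ∈ Mod (T ∪ A) ∧ I2 ∈ Mod T := by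
  have hnotin : ∀ {c : Δ}, c ∈ KB.constants (T ∪ A) → c ∉ I2.support :=
    fun hcm hs => hc.ne_of_mem hs hcm rfl
  have hconst : ∀ {a : Assertion}, a ∈ A → ∀ {c : Δ}, c ∈ a.constants →
      c ∈ KB.constants (T ∪ A) := by
    intro a ha c hcm
    exact Set.mem_biUnion (Finset.mem_union_right T ha) hcm
  constructor
  · intro h
    refine ⟨?_, fun a haT => ((sat_tbox_union (hT a haT) hdisj).1
      (h a (Finset.mem_union_left A haT))).2⟩
    intro a haK
    rcases Finset.mem_union.1 haK with haT | haA
    · exact ((sat_tbox_union (hT a haT) hdisj).1 (h a haK)).1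
    · have hs := h a haK
      cases a with
      | memberC A' c =>
        rcases hs with h' | h'
        · exact h'
        · exact absurd (support_of_concept (B := .atom A') h')
            (hnotin (hconst haA (by simp [Assertion.constants])))
      | memberR P c d =>
        rcases hs with h' | h'
        · exact h'
        · exact absurd (support_of_role (R := .pos P) h').1
            (hnotin (hconst haA (by simp [Assertion.constants])))
      | conceptIncl B1 B2 => exact absurd (hA _ haA) (by simp [Assertion.isMembership])
      | conceptDisj B1 B2 => exact absurd (hA _ haA) (by simp [Assertion.isMembership])
      | roleIncl R1 R2 => exact absurd (hA _ haA) (by simp [Assertion.isMembership])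
      | roleDisj R1 R2 => exact absurd (hA _ haA) (by simp [Assertion.isMembership])
      | funct R => exact absurd (hA _ haA) (by simp [Assertion.isMembership])
  · rintro ⟨h1, h2⟩ a haK
    rcases Finset.mem_union.1 haK with haT | haA
    · exact (sat_tbox_union (hT a haT) hdisj).2 ⟨h1 a haK, h2 a haT⟩
    · have hs := h1 a haK
      cases a with
      | memberC A' c => exact Or.inl hs
      | memberR P c d => exact Or.inl hs
      | conceptIncl B1 B2 => exact absurd (hA _ haA) (by simp [Assertion.isMembership])
      | conceptDisj B1 B2 => exact absurd (hA _ haA) (by simp [Assertion.isMembership])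
      | roleIncl R1 R2 => exact absurd (hA _ haA) (by simp [Assertion.isMembership])
      | roleDisj R1 R2 => exact absurd (hA _ haA) (by simp [Assertion.isMembership])
      | funct R => exact absurd (hA _ haA) (by simp [Assertion.isMembership])

end DLLite
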